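/- If F : ℂ → ℂ is C¹ and Lagrangian, i.e. Im[(1+|ξ|²)² ∂(F/(1+|ξ|²)²)] = 0 at every ξ ∈ ℂ, then there exists a real-valued function r : ℂ → ℝ (a support function) such that F = ½(1+|ξ|²)² ∂̄r on all of ℂ. -/

import Mathlib

open Complex MeasureTheory Metric


lemma clm_expand (L : ℂ →L[ℝ] ℝ) (u : ℂ) :
    L u = u.re * L 1 + u.im * L Complex.I := by
  have h : u = u.re • (1:ℂ) + u.im • Complex.I := by
    apply Complex.ext <;> simp
  calc L u = L (u.re • (1:ℂ) + u.im • Complex.I) := by rw [← h]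
    _ = u.re * L 1 + u.im * L Complex.I := by
        rw [map_add, _root_.map_smul, _root_.map_smul]; simp [smul_eq_mul]

lemma exists_potential (P Q : ℂ → ℝ) (hP : ContDiff ℝ 1 P) (hQ : ContDiff ℝ 1 Q)
    (hcurl : ∀ ξ : ℂ, fderiv ℝ P ξ Complex.I = fderiv ℝ Q ξ 1) :
    ∃ r : ℂ → ℝ, ∀ ξ : ℂ,
      HasFDerivAt r (P ξ • Complex.reCLM + Q ξ • Complex.imCLM) ξ := by
  classical
  have hPd := hP.differentiable one_ne_zero
  have hQd := hQ.differentiable one_ne_zero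
  refine ⟨fun z => ∫ t in (0:ℝ)..1, (P (t • z) * z.re + Q (t • z) * z.im), fun ξ => ?_⟩
  set A : ℂ → ℝ → (ℂ →L[ℝ] ℝ) := fun z t =>
    (P (t • z) • Complex.reCLM +
      z.re • ((fderiv ℝ P (t • z)).comp (t • ContinuousLinearMap.id ℝ ℂ))) +
    (Q (t • z) • Complex.imCLM +
      z.im • ((fderiv ℝ Q (t • z)).comp (t • ContinuousLinearMap.id ℝ ℂ))) with hA
  have hsm : ∀ (t : ℝ) (z : ℂ),
      HasFDerivAt (fun w : ℂ => t • w) (t • ContinuousLinearMap.id ℝ ℂ) z :=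
    fun t z => (hasFDerivAt_id z).const_smul t
  have hdiff : ∀ (t : ℝ) (z : ℂ),
      HasFDerivAt (fun w => P (t • w) * w.re + Q (t • w) * w.im) (A z t) z := by
    intro t z
    have h1 : HasFDerivAt (fun w : ℂ => P (t • w))
        ((fderiv ℝ P (t • z)).comp (t • ContinuousLinearMap.id ℝ ℂ)) z :=
      (hPd (t • z)).hasFDerivAt.comp z (hsm t z)
    have h2 : HasFDerivAt (fun w : ℂ => Q (t • w))
        ((fderiv ℝ Q (t • z)).comp (t • ContinuousLinearMap.id ℝ ℂ)) z :=
      (hQd (t • z)).hasFDerivAt.comp z (hsm t z)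
    have hre : HasFDerivAt (fun w : ℂ => w.re) Complex.reCLM z := Complex.reCLM.hasFDerivAt
    have him : HasFDerivAt (fun w : ℂ => w.im) Complex.imCLM z := Complex.imCLM.hasFDerivAt
    exact (h1.mul hre).add (h2.mul him)
  have hsm_cont : Continuous (fun p : ℂ × ℝ => p.2 • p.1) := continuous_snd.smul continuous_fst
  have hfP : Continuous (fderiv ℝ P) := hP.continuous_fderiv one_ne_zero
  have hfQ : Continuous (fderiv ℝ Q) := hQ.continuous_fderiv one_ne_zero
  have hAcont : Continuous (fun p : ℂ × ℝ => A p.1 p.2) := by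
    apply Continuous.add
    · exact ((hP.continuous.comp hsm_cont).smul continuous_const).add
        ((Complex.continuous_re.comp continuous_fst).smul
          ((hfP.comp hsm_cont).clm_comp (continuous_snd.smul continuous_const)))
    · exact ((hQ.continuous.comp hsm_cont).smul continuous_const).add
        ((Complex.continuous_im.comp continuous_fst).smul
          ((hfQ.comp hsm_cont).clm_comp (continuous_snd.smul continuous_const)))
  obtain ⟨C, hC⟩ := ((isCompact_closedBall ξ 1).prod isCompact_Icc).exists_bound_of_continuousOn
    (s := closedBall ξ 1 ×ˢ Set.Icc (0:ℝ) 1) hAcont.continuousOn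
  have hsub : Set.uIoc (0:ℝ) 1 ⊆ Set.Icc (0:ℝ) 1 := by
    rw [Set.uIoc_of_le zero_le_one]; exact fun t ht => ⟨ht.1.le, ht.2⟩
  have key := intervalIntegral.hasFDerivAt_integral_of_dominated_of_fderiv_le
    (𝕜 := ℝ) (μ := volume)
    (F := fun z t => P (t • z) * z.re + Q (t • z) * z.im) (F' := A) (x₀ := ξ)
    (a := 0) (b := 1) (bound := fun _ => C) (s := ball ξ 1) (ball_mem_nhds ξ one_pos)
    (Filter.Eventually.of_forall fun x =>
      ((((hP.continuous.comp (continuous_id.smul continuous_const)).mul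
        continuous_const).add ((hQ.continuous.comp (continuous_id.smul continuous_const)).mul
        continuous_const)).aestronglyMeasurable))
    ((((hP.continuous.comp (continuous_id.smul continuous_const)).mul
        continuous_const).add ((hQ.continuous.comp (continuous_id.smul continuous_const)).mul
        continuous_const)).intervalIntegrable 0 1)
    ((hAcont.comp (continuous_const.prodMk continuous_id)).aestronglyMeasurable)
    (Filter.Eventually.of_forall fun t ht x hx =>
      hC (x, t) ⟨ball_subset_closedBall hx, hsub ht⟩)
    (intervalIntegrable_const)
    (Filter.Eventually.of_forall fun t _ x _ => hdiff t x)
  have hAint : IntervalIntegrable (A ξ) volume 0 1 :=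
    (hAcont.comp (continuous_const.prodMk continuous_id)).intervalIntegrable 0 1
  have hptw : ∀ (t : ℝ) (v : ℂ), A ξ t v =
      (P (t • ξ) + t * fderiv ℝ P (t • ξ) ξ) * v.re
        + (Q (t • ξ) + t * fderiv ℝ Q (t • ξ) ξ) * v.im := by
    intro t v
    simp only [hA, ContinuousLinearMap.add_apply, ContinuousLinearMap.smul_apply,
      ContinuousLinearMap.coe_comp', Function.comp_apply, ContinuousLinearMap.coe_smul',
      Pi.smul_apply, ContinuousLinearMap.id_apply, smul_eq_mul]
    rw [clm_expand (fderiv ℝ P (t • ξ)) (t • v), clm_expand (fderiv ℝ Q (t • ξ)) (t • v),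
      clm_expand (fderiv ℝ P (t • ξ)) ξ, clm_expand (fderiv ℝ Q (t • ξ)) ξ, hcurl (t • ξ)]
    simp only [Complex.smul_re, Complex.smul_im, Complex.reCLM_apply, Complex.imCLM_apply,
      smul_eq_mul]
    ring
  have hφd : ∀ (R : ℂ → ℝ), ContDiff ℝ 1 R → ∀ t : ℝ,
      HasDerivAt (fun s : ℝ => s * R (s • ξ)) (R (t • ξ) + t * fderiv ℝ R (t • ξ) ξ) t := by
    intro R hR t
    have h1 : HasDerivAt (fun s : ℝ => s • ξ) ξ t := by
      simpa using (hasDerivAt_id t).smul_const ξ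
    have h2 : HasDerivAt (fun s : ℝ => R (s • ξ)) (fderiv ℝ R (t • ξ) ξ) t :=
      ((hR.differentiable one_ne_zero) (t • ξ)).hasFDerivAt.comp_hasDerivAt t h1
    have h3 := (hasDerivAt_id' t).mul h2
    simp only [one_mul] at h3
    exact h3
  have hPI : IntervalIntegrable (fun t : ℝ => P (t • ξ) + t * fderiv ℝ P (t • ξ) ξ)
      volume 0 1 := by
    apply Continuous.intervalIntegrable
    exact (hP.continuous.comp (continuous_id.smul continuous_const)).add
      (continuous_id.mul ((hfP.comp (continuous_id.smul continuous_const)).clm_apply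
        continuous_const))
  have hQI : IntervalIntegrable (fun t : ℝ => Q (t • ξ) + t * fderiv ℝ Q (t • ξ) ξ)
      volume 0 1 := by
    apply Continuous.intervalIntegrable
    exact (hQ.continuous.comp (continuous_id.smul continuous_const)).add
      (continuous_id.mul ((hfQ.comp (continuous_id.smul continuous_const)).clm_apply
        continuous_const))
  have hPint : (∫ t in (0:ℝ)..1, (P (t • ξ) + t * fderiv ℝ P (t • ξ) ξ)) = P ξ := by
    have := intervalIntegral.integral_eq_sub_of_hasDerivAt
      (f := fun s : ℝ => s * P (s • ξ)) (fun t _ => hφd P hP t) hPI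
    simpa using this
  have hQint : (∫ t in (0:ℝ)..1, (Q (t • ξ) + t * fderiv ℝ Q (t • ξ) ξ)) = Q ξ := by
    have := intervalIntegral.integral_eq_sub_of_hasDerivAt
      (f := fun s : ℝ => s * Q (s • ξ)) (fun t _ => hφd Q hQ t) hQI
    simpa using this
  have hIeq : (∫ t in (0:ℝ)..1, A ξ t) = P ξ • Complex.reCLM + Q ξ • Complex.imCLM := by
    apply ContinuousLinearMap.ext
    intro v
    rw [ContinuousLinearMap.intervalIntegral_apply hAint v]
    calc (∫ t in (0:ℝ)..1, A ξ t v)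
        = ∫ t in (0:ℝ)..1, ((P (t • ξ) + t * fderiv ℝ P (t • ξ) ξ) * v.re
            + (Q (t • ξ) + t * fderiv ℝ Q (t • ξ) ξ) * v.im) := by
          exact intervalIntegral.integral_congr fun t _ => hptw t v
      _ = (∫ t in (0:ℝ)..1, (P (t • ξ) + t * fderiv ℝ P (t • ξ) ξ)) * v.re
            + (∫ t in (0:ℝ)..1, (Q (t • ξ) + t * fderiv ℝ Q (t • ξ) ξ)) * v.im := by
          rw [intervalIntegral.integral_add (hPI.mul_const _) (hQI.mul_const _),
            intervalIntegral.integral_mul_const, intervalIntegral.integral_mul_const]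
      _ = (P ξ • Complex.reCLM + Q ξ • Complex.imCLM) v := by
          rw [hPint, hQint]; simp [smul_eq_mul]
  rw [hIeq] at key
  exact key

/-- Wirtinger derivative `∂f(ξ) = ½(Df(ξ)[1] − i·Df(ξ)[i])`, with `Df` the real Fréchet
derivative. -/
noncomputable def wD (f : ℂ → ℂ) (ξ : ℂ) : ℂ :=
  (1 / 2 : ℂ) * (fderiv ℝ f ξ 1 - Complex.I * fderiv ℝ f ξ Complex.I)

/-- Wirtinger derivative `∂̄f(ξ) = ½(Df(ξ)[1] + i·Df(ξ)[i])`, with `Df` the real Fréchet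
derivative. -/
noncomputable def wDbar (f : ℂ → ℂ) (ξ : ℂ) : ℂ :=
  (1 / 2 : ℂ) * (fderiv ℝ f ξ 1 + Complex.I * fderiv ℝ f ξ Complex.I)

/-- The spherical Laplacian in the stereographic coordinate: `Δf(ξ) = (1+|ξ|²)² ∂∂̄f(ξ)`. -/
noncomputable def sphLap (f : ℂ → ℂ) (ξ : ℂ) : ℂ :=
  (1 + (normSq ξ : ℂ)) ^ 2 * wD (wDbar f) ξ

/-- If `F : ℂ → ℂ` is `C¹` and Lagrangian, i.e. `Im[(1+|ξ|²)² ∂(F/(1+|ξ|²)²)] = 0`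
everywhere, then there exists a real-valued support function `r : ℂ → ℝ` with
`F = ½(1+|ξ|²)² ∂̄r` on all of `ℂ`. -/
theorem stmt6 (F : ℂ → ℂ) (hF : ContDiff ℝ 1 F)
    (hLag : ∀ ξ : ℂ,
      ((1 + (normSq ξ : ℂ)) ^ 2 * wD (fun w => F w / (1 + (normSq w : ℂ)) ^ 2) ξ).im = 0) :
    ∃ r : ℂ → ℝ, ∀ ξ : ℂ,
      F ξ = (1 / 2) * (1 + (normSq ξ : ℂ)) ^ 2 * wDbar (fun w => (r w : ℂ)) ξ := by
  classical
  set G : ℂ → ℂ := fun w => F w / (1 + (normSq w : ℂ)) ^ 2 with hGdef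
  have hne : ∀ w : ℂ, (1 + (normSq w : ℂ)) ^ 2 ≠ 0 := by
    intro w
    have h1 : (1 + (normSq w : ℂ)) = ((1 + normSq w : ℝ) : ℂ) := by push_cast; ring
    rw [h1]
    have : (0:ℝ) < 1 + normSq w := add_pos_of_pos_of_nonneg one_pos (normSq_nonneg w)
    exact pow_ne_zero _ (by exact_mod_cast this.ne')
  have hns : ContDiff ℝ 1 (fun w : ℂ => normSq w) := by
    have := (Complex.reCLM.contDiff (n := 1)).mul (Complex.reCLM.contDiff (n := 1)) |>.add
      ((Complex.imCLM.contDiff (n := 1)).mul (Complex.imCLM.contDiff (n := 1)))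
    simpa [Complex.normSq_apply] using this
  have hden : ContDiff ℝ 1 (fun w : ℂ => (1 + (normSq w : ℂ)) ^ 2) :=
    (contDiff_const.add (Complex.ofRealCLM.contDiff.comp hns)).pow 2
  have hG : ContDiff ℝ 1 G := by
    have hinv : ContDiff ℝ 1 (fun w : ℂ => ((1 + (normSq w : ℂ)) ^ 2)⁻¹) := hden.inv hne
    simpa [hGdef, div_eq_mul_inv] using hF.mul hinv
  have hGd : ∀ ξ, DifferentiableAt ℝ G ξ := fun ξ => (hG.differentiable one_ne_zero) ξ
  set P : ℂ → ℝ := fun w => 4 * (G w).re with hPdef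
  set Q : ℂ → ℝ := fun w => 4 * (G w).im with hQdef
  have hPc : ContDiff ℝ 1 P := contDiff_const.mul (Complex.reCLM.contDiff.comp hG)
  have hQc : ContDiff ℝ 1 Q := contDiff_const.mul (Complex.imCLM.contDiff.comp hG)
  have hfP : ∀ ξ, HasFDerivAt P ((4:ℝ) • (Complex.reCLM.comp (fderiv ℝ G ξ))) ξ :=
    fun ξ => (Complex.reCLM.hasFDerivAt.comp ξ (hGd ξ).hasFDerivAt).const_mul 4
  have hfQ : ∀ ξ, HasFDerivAt Q ((4:ℝ) • (Complex.imCLM.comp (fderiv ℝ G ξ))) ξ :=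
    fun ξ => (Complex.imCLM.hasFDerivAt.comp ξ (hGd ξ).hasFDerivAt).const_mul 4
  have hlag' : ∀ ξ, (fderiv ℝ G ξ 1).im = (fderiv ℝ G ξ Complex.I).re := by
    intro ξ
    have h := hLag ξ
    have h1 : (1 + (normSq ξ : ℂ)) ^ 2 = (((1 + normSq ξ) ^ 2 : ℝ) : ℂ) := by push_cast; ring
    rw [h1] at h
    have hc : ((1 + normSq ξ) ^ 2 : ℝ) ≠ 0 :=
      pow_ne_zero _ (add_pos_of_pos_of_nonneg one_pos (normSq_nonneg ξ)).ne'
    have h2 : (wD G ξ).im = 0 := by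
      have hmul : ((1 + normSq ξ) ^ 2 : ℝ) * (wD G ξ).im = 0 := by
        rw [Complex.mul_im, Complex.ofReal_re, Complex.ofReal_im, zero_mul, add_zero] at h
        exact h
      rcases mul_eq_zero.1 hmul with h' | h'
      · exact absurd h' hc
      · exact h'
    simp only [wD, Complex.mul_im, Complex.mul_re, Complex.sub_im, Complex.sub_re,
      Complex.I_re, Complex.I_im, Complex.div_re, Complex.div_im] at h2
    norm_num at h2
    linarith
  have hcurl : ∀ ξ : ℂ, fderiv ℝ P ξ Complex.I = fderiv ℝ Q ξ 1 := by
    intro ξ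
    rw [(hfP ξ).fderiv, (hfQ ξ).fderiv]
    simp only [ContinuousLinearMap.smul_apply, ContinuousLinearMap.coe_comp',
      Function.comp_apply, Complex.reCLM_apply, Complex.imCLM_apply, smul_eq_mul]
    rw [hlag' ξ]
  obtain ⟨r, hr⟩ := exists_potential P Q hPc hQc hcurl
  refine ⟨r, fun ξ => ?_⟩
  have hcd : HasFDerivAt (fun w => ((r w : ℝ) : ℂ))
      (Complex.ofRealCLM.comp (P ξ • Complex.reCLM + Q ξ • Complex.imCLM)) ξ :=
    Complex.ofRealCLM.hasFDerivAt.comp ξ (hr ξ)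
  rw [wDbar, hcd.fderiv]
  simp only [ContinuousLinearMap.coe_comp', Function.comp_apply,
    ContinuousLinearMap.add_apply, ContinuousLinearMap.smul_apply, Complex.reCLM_apply,
    Complex.imCLM_apply, Complex.ofRealCLM_apply, Complex.one_re, Complex.one_im,
    Complex.I_re, Complex.I_im, smul_eq_mul, mul_one, mul_zero, add_zero, zero_add]
  have h4 : ((P ξ : ℝ) : ℂ) + Complex.I * ((Q ξ : ℝ) : ℂ) = 4 * G ξ := by
    rw [hPdef, hQdef]
    apply Complex.ext <;> simp [Complex.mul_re, Complex.mul_im]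
  rw [h4]
  have hGx : G ξ = F ξ / (1 + (normSq ξ : ℂ)) ^ 2 := rfl
  rw [hGx]
  have harith : (1/2 : ℂ) * (1 + (normSq ξ : ℂ)) ^ 2
        * (1/2 * (4 * (F ξ / (1 + (normSq ξ : ℂ)) ^ 2)))
      = F ξ / (1 + (normSq ξ : ℂ)) ^ 2 * (1 + (normSq ξ : ℂ)) ^ 2 := by ring
  rw [harith, div_mul_cancel₀ _ (hne ξ)]
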